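/- Let μ > 0, λ + 2μ > 0 and g > 0. If u : ℝ³ → ℝ³ is smooth and compactly supported and satisfies on all of ℝ³ the homogeneous simplified gradient elasticity equation (1 − g²Δ)(Δ*·u) = 0, i.e. g² Δ(Δ*·u) − Δ*·u = 0 componentwise, then u ≡ 0. In other words, the fourth-order operator of the simplified gradient elasticity model has trivial kernel among smooth compactly supported vector fields. -/

import Mathlib

open MeasureTheory

noncomputable section

/-- Points of `ℝ³`. -/
abbrev V : Type := Fin 3 → ℝ

/-- `i`-th partial derivative of a scalar field on `ℝ³`. -/
noncomputable def pd (i : Fin 3) (f : V → ℝ) : V → ℝ :=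
  fun x => fderiv ℝ f x (Pi.single i 1)

/-- Divergence of a vector field. -/
noncomputable def divg (u : V → V) : V → ℝ :=
  fun x => ∑ j : Fin 3, pd j (fun y => u y j) x

/-- Componentwise Laplacian of a vector field. -/
noncomputable def vlap (u : V → V) (k : Fin 3) : V → ℝ :=
  fun x => ∑ j : Fin 3, pd j (pd j (fun y => u y k)) x

/-- The strain tensor `e_{jk}(u) = ½(∂_j u_k + ∂_k u_j)`. -/
noncomputable def strain (u : V → V) (j k : Fin 3) : V → ℝ :=
  fun x => (1/2) * (pd j (fun y => u y k) x + pd k (fun y => u y j) x)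

/-- The Lamé (Navier) operator `(Δ*·u)_k = μ (Δu)_k + (λ+μ) ∂_k (div u)`. -/
noncomputable def navier (lam mu : ℝ) (u : V → V) (k : Fin 3) : V → ℝ :=
  fun x => mu * vlap u k x + (lam + mu) * pd k (divg u) x

/-- The gradient of the strain, `(∇e(u))_{ijk} = ∂_i e_{jk}(u)`. -/
noncomputable def gradStrain (u : V → V) (i j k : Fin 3) : V → ℝ :=
  pd i (strain u j k)

/-- Contraction of a sixth order tensor with a triadic:
`(H⫶κ)_{ijk} = Σ_{l,m,n} H_{ijklmn} κ_{lmn}`. -/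
def Hcontr (H : Fin 3 → Fin 3 → Fin 3 → Fin 3 → Fin 3 → Fin 3 → ℝ)
    (κ : Fin 3 → Fin 3 → Fin 3 → ℝ) (i j k : Fin 3) : ℝ :=
  ∑ l : Fin 3, ∑ m : Fin 3, ∑ n : Fin 3, H i j k l m n * κ l m n

/-- A triadic is symmetric if it is symmetric in its last two indices. -/
def SymTriadic (κ : Fin 3 → Fin 3 → Fin 3 → ℝ) : Prop :=
  ∀ i j k, κ i j k = κ i k j

/-- The symmetries `H_{ijklmn} = H_{ikjlmn} = H_{ijklnm} = H_{lmnijk}`. -/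
def Hsym (H : Fin 3 → Fin 3 → Fin 3 → Fin 3 → Fin 3 → Fin 3 → ℝ) : Prop :=
  ∀ i j k l m n, H i j k l m n = H i k j l m n ∧
    H i j k l m n = H i j k l n m ∧ H i j k l m n = H l m n i j k

/-- Positivity of `H` with constant `α` on symmetric triadics. -/
def Hpos (H : Fin 3 → Fin 3 → Fin 3 → Fin 3 → Fin 3 → Fin 3 → ℝ) (α : ℝ) : Prop :=
  ∀ κ : Fin 3 → Fin 3 → Fin 3 → ℝ, SymTriadic κ →
    α * (∑ i : Fin 3, ∑ j : Fin 3, ∑ k : Fin 3, (κ i j k)^2) ≤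
      ∑ i : Fin 3, ∑ j : Fin 3, ∑ k : Fin 3, ∑ l : Fin 3, ∑ m : Fin 3, ∑ n : Fin 3,
        κ i j k * H i j k l m n * κ l m n

/-- The double stress tensor of Mindlin Form II gradient elasticity with constitutive
parameters `a₁,…,a₅`. -/
noncomputable def dstress (a1 a2 a3 a4 a5 : ℝ) (u : V → V) (i j k : Fin 3) : V → ℝ :=
  fun x =>
    (1/2) * a1 * ((if j = k then (1:ℝ) else 0) * vlap u i x
      + (if i = j then (1:ℝ) else 0) * pd k (divg u) x
      + (if j = k then (1:ℝ) else 0) * pd i (divg u) x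
      + (if i = k then (1:ℝ) else 0) * pd j (divg u) x)
    + 2 * a2 * (if j = k then (1:ℝ) else 0) * pd i (divg u) x
    + (1/2) * a3 * ((if i = j then (1:ℝ) else 0) * vlap u k x
      + (if i = j then (1:ℝ) else 0) * pd k (divg u) x
      + (if i = k then (1:ℝ) else 0) * vlap u j x
      + (if i = k then (1:ℝ) else 0) * pd j (divg u) x)
    + a4 * (pd i (pd j (fun y => u y k)) x + pd i (pd k (fun y => u y j)) x)
    + (1/2) * a5 * (2 * pd j (pd k (fun y => u y i)) x
      + pd i (pd j (fun y => u y k)) x + pd i (pd k (fun y => u y j)) x)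
/-! ### Auxiliary lemmas -/

theorem smooth_diff {f : V → ℝ} (hf : ContDiff ℝ (⊤:ℕ∞) f) : Differentiable ℝ f :=
  hf.differentiable (by simp)

theorem fderiv_smooth {f : V → ℝ} (hf : ContDiff ℝ (⊤:ℕ∞) f) :
    ContDiff ℝ (⊤:ℕ∞) (fderiv ℝ f) :=
  hf.fderiv_right (by exact_mod_cast le_top)

theorem pd_contDiff (i : Fin 3) {f : V → ℝ} (hf : ContDiff ℝ (⊤:ℕ∞) f) :
    ContDiff ℝ (⊤:ℕ∞) (pd i f) :=
  (fderiv_smooth hf).clm_apply contDiff_const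

theorem pd_hcs (i : Fin 3) {f : V → ℝ} (hc : HasCompactSupport f) :
    HasCompactSupport (pd i f) :=
  hc.fderiv_apply ℝ (Pi.single i 1)

theorem pd_mul (i : Fin 3) {f h : V → ℝ} (hf : ContDiff ℝ (⊤:ℕ∞) f) (hh : ContDiff ℝ (⊤:ℕ∞) h) :
    pd i (fun x => f x * h x) = fun x => pd i f x * h x + f x * pd i h x := by
  funext x
  simp only [pd]
  rw [fderiv_fun_mul (smooth_diff hf x) (smooth_diff hh x)]
  simp; ring

theorem pd_fderiv_apply (i : Fin 3) {f : V → ℝ} (hf : ContDiff ℝ (⊤:ℕ∞) f) (w : V) (x : V) :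
    pd i (fun y => fderiv ℝ f y w) x = (fderiv ℝ (fderiv ℝ f) x) (Pi.single i 1) w := by
  simp only [pd]
  rw [fderiv_clm_apply ((fderiv_smooth hf).differentiable
    (by simp) x) (differentiableAt_const w)]
  simp

theorem pd_comm (i j : Fin 3) {f : V → ℝ} (hf : ContDiff ℝ (⊤:ℕ∞) f) (x : V) :
    pd i (pd j f) x = pd j (pd i f) x := by
  have hdf : ∀ y, HasFDerivAt f (fderiv ℝ f y) y :=
    fun y => (smooth_diff hf y).hasFDerivAt
  have h2 : DifferentiableAt ℝ (fderiv ℝ f) x :=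
    (fderiv_smooth hf).differentiable (by simp) x
  have hsym := second_derivative_symmetric hdf h2.hasFDerivAt (Pi.single i 1) (Pi.single j 1)
  have e1 : pd i (pd j f) x = (fderiv ℝ (fderiv ℝ f) x) (Pi.single i 1) (Pi.single j 1) := by
    simp only [pd]; exact pd_fderiv_apply i hf (Pi.single j 1) x
  have e2 : pd j (pd i f) x = (fderiv ℝ (fderiv ℝ f) x) (Pi.single j 1) (Pi.single i 1) := by
    simp only [pd]; exact pd_fderiv_apply j hf (Pi.single i 1) x
  rw [e1, e2, hsym]

theorem integral_pd (i : Fin 3) {f : V → ℝ} (hf : ContDiff ℝ (⊤:ℕ∞) f)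
    (hc : HasCompactSupport f) : ∫ x : V, pd i f x = 0 := by
  obtain ⟨r, hr⟩ := hc.isBounded.subset_closedBall (0 : V)
  set R : ℝ := |r| + 1 with hR
  have hR1 : (1:ℝ) ≤ R := by simp only [hR]; linarith [abs_nonneg r]
  have hsub : tsupport f ⊆ Metric.closedBall (0:V) (R-1) :=
    hr.trans (Metric.closedBall_subset_closedBall (by simp [hR, le_abs_self]))
  set a : V := fun _ => -R with ha
  set b : V := fun _ => R with hb
  have hle : a ≤ b := fun j => by simp only [ha, hb]; linarith
  have hout : ∀ x : V, (∃ j, R ≤ |x j|) → x ∉ tsupport f := by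
    intro x ⟨j, hj⟩ hmem
    have h1 := hsub hmem
    simp only [Metric.mem_closedBall, dist_zero_right] at h1
    have h2 : |x j| ≤ R - 1 := le_trans (by simpa using norm_le_pi_norm x j) h1
    linarith
  have hsum : (fun x : V => ∑ j : Fin 3, (if j = i then fderiv ℝ f x else 0) (Pi.single j 1))
      = pd i f := by
    funext x
    have h1 : ∀ j : Fin 3, (if j = i then fderiv ℝ f x else 0) (Pi.single j 1)
        = if j = i then fderiv ℝ f x (Pi.single j 1) else 0 := fun j => by
      split <;> simp
    rw [Finset.sum_congr rfl fun j _ => h1 j]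
    simp [pd, Finset.sum_ite_eq']
  have key := MeasureTheory.integral_divergence_of_hasFDerivAt_off_countable' a b hle
    (fun j => if j = i then f else 0)
    (fun j x => if j = i then fderiv ℝ f x else 0) ∅ Set.countable_empty
    (fun j => by
      by_cases h : j = i <;> simp only [h, ite_true, ite_false]
      exacts [hf.continuous.continuousOn, continuousOn_const])
    (fun x _ j => by
      by_cases h : j = i <;> simp only [h, ite_true, ite_false]
      exacts [(smooth_diff hf x).hasFDerivAt, hasFDerivAt_const (0:ℝ) x])
    (by
      rw [show (fun x : V => ∑ j : Fin 3, (if j = i then fderiv ℝ f x else 0) (Pi.single j 1))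
          = pd i f from hsum]
      exact ((pd_contDiff i hf).continuous.integrable_of_hasCompactSupport
        (pd_hcs i hc)).integrableOn)
  have hzero : ∀ (j : Fin 3) (c : ℝ), R ≤ |c| →
      ∀ y : Fin 2 → ℝ, (if j = i then f else 0) (j.insertNth c y) = 0 := by
    intro j c hcR y
    by_cases h : j = i
    · simp only [h, ite_true]
      exact image_eq_zero_of_notMem_tsupport
        (hout _ ⟨i, by rw [← h, Fin.insertNth_apply_same]; exact hcR⟩)
    · simp [h]
  have hb' : ∀ j : Fin 3, R ≤ |b j| :=
    fun j => by simp only [hb]; rw [abs_of_nonneg (by linarith)]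
  have ha' : ∀ j : Fin 3, R ≤ |a j| :=
    fun j => by simp only [ha, abs_neg]; rw [abs_of_nonneg (by linarith)]
  rw [Finset.sum_eq_zero (fun j _ => by
    rw [show (fun x => (if j = i then f else 0) (j.insertNth (b j) x))
        = fun _ : Fin 2 → ℝ => (0:ℝ) from funext fun y => hzero j (b j) (hb' j) y,
      show (fun x => (if j = i then f else 0) (j.insertNth (a j) x))
        = fun _ : Fin 2 → ℝ => (0:ℝ) from funext fun y => hzero j (a j) (ha' j) y]
    simp)] at key
  have key2 : ∫ x in Set.Icc a b, pd i f x = 0 := by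
    rw [← hsum]; exact key
  rw [← key2]
  symm
  apply MeasureTheory.setIntegral_eq_integral_of_forall_compl_eq_zero
  intro x hx
  have hex : ∃ j, R ≤ |x j| := by
    by_contra hcon
    push_neg at hcon
    exact hx ⟨fun j => by have := hcon j; simp only [ha]; cases abs_lt.mp this; linarith,
      fun j => by have := hcon j; simp only [hb]; cases abs_lt.mp this; linarith⟩
  have hnot := hout x hex
  simp only [pd]
  rw [show fderiv ℝ f x = 0 from by
    by_contra hne
    exact hnot (support_fderiv_subset ℝ (Function.mem_support.mpr hne))]
  simp

theorem integ {f : V → ℝ} (hf : ContDiff ℝ (⊤:ℕ∞) f) (hc : HasCompactSupport f) :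
    Integrable f :=
  hf.continuous.integrable_of_hasCompactSupport hc

/-- integration by parts -/
theorem ibp (i : Fin 3) {f h : V → ℝ} (hf : ContDiff ℝ (⊤:ℕ∞) f) (hh : ContDiff ℝ (⊤:ℕ∞) h)
    (hcf : HasCompactSupport f) :
    ∫ x : V, f x * pd i h x = - ∫ x : V, pd i f x * h x := by
  have hprod : HasCompactSupport (fun x => f x * h x) := hcf.mul_right
  have h0 := integral_pd i (hf.mul hh) hprod
  rw [pd_mul i hf hh] at h0
  have h1 : Integrable (fun x => pd i f x * h x) :=
    integ ((pd_contDiff i hf).mul hh) (pd_hcs i hcf).mul_right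
  have h2 : Integrable (fun x => f x * pd i h x) :=
    integ (hf.mul (pd_contDiff i hh)) hcf.mul_right
  rw [integral_add h1 h2] at h0
  linarith

theorem zero_of_integral_sq {f : V → ℝ} (hf : ContDiff ℝ (⊤:ℕ∞) f) (hc : HasCompactSupport f)
    (h0 : ∫ x : V, f x * f x = 0) : ∀ x, f x = 0 := by
  have hint : Integrable (fun x => f x * f x) := integ (hf.mul hf) hc.mul_right
  have hae := (integral_eq_zero_iff_of_nonneg (fun x => mul_self_nonneg (f x)) hint).mp h0
  have heq : (fun x => f x * f x) = (fun _ : V => (0:ℝ)) :=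
    (Continuous.ae_eq_iff_eq volume (hf.continuous.mul hf.continuous) continuous_const).mp hae
  intro x
  have := congrFun heq x
  simpa [mul_self_eq_zero] using this

theorem hcs_sum {f : Fin 3 → V → ℝ} (h : ∀ j, HasCompactSupport (f j)) :
    HasCompactSupport (fun x => ∑ j : Fin 3, f j x) := by
  classical
  have : ∀ s : Finset (Fin 3), HasCompactSupport (fun x => ∑ j ∈ s, f j x) := by
    intro s
    induction s using Finset.induction with
    | empty =>
        simp only [Finset.sum_empty]; exact HasCompactSupport.zero
    | insert _ _ hx ih =>
        simp only [Finset.sum_insert hx]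
        exact (h _).add ih
  exact this Finset.univ

/-- energy identity for the Laplacian -/
theorem lap_energy {f : V → ℝ} (hf : ContDiff ℝ (⊤:ℕ∞) f) (hc : HasCompactSupport f) :
    ∫ x : V, f x * (∑ j : Fin 3, pd j (pd j f) x)
      = - ∑ j : Fin 3, ∫ x : V, pd j f x * pd j f x := by
  have h1 : (fun x : V => f x * (∑ j : Fin 3, pd j (pd j f) x))
      = fun x => ∑ j : Fin 3, f x * pd j (pd j f) x := by
    funext x; rw [Finset.mul_sum]
  rw [h1, MeasureTheory.integral_finset_sum _ (fun j _ =>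
    integ (hf.mul (pd_contDiff j (pd_contDiff j hf))) hc.mul_right)]
  rw [← Finset.sum_neg_distrib]
  apply Finset.sum_congr rfl
  intro j _
  rw [ibp j hf (pd_contDiff j hf) hc]

section ops
variable {u : V → V} (hu : ContDiff ℝ (⊤:ℕ∞) u) (hc : HasCompactSupport u)

theorem comp_smooth (k : Fin 3) (hu : ContDiff ℝ (⊤:ℕ∞) u) :
    ContDiff ℝ (⊤:ℕ∞) (fun y => u y k) := (contDiff_pi.mp hu) k

theorem comp_hcs (k : Fin 3) (hc : HasCompactSupport u) :
    HasCompactSupport (fun y => u y k) := hc.comp_left (g := fun v : V => v k) rfl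

theorem divg_smooth (hu : ContDiff ℝ (⊤:ℕ∞) u) : ContDiff ℝ (⊤:ℕ∞) (divg u) :=
  ContDiff.sum fun j _ => pd_contDiff j (comp_smooth j hu)

theorem divg_hcs (hc : HasCompactSupport u) : HasCompactSupport (divg u) :=
  hcs_sum fun j => pd_hcs j (comp_hcs j hc)

theorem vlap_smooth (k : Fin 3) (hu : ContDiff ℝ (⊤:ℕ∞) u) : ContDiff ℝ (⊤:ℕ∞) (vlap u k) :=
  ContDiff.sum fun j _ => pd_contDiff j (pd_contDiff j (comp_smooth k hu))

theorem vlap_hcs (k : Fin 3) (hc : HasCompactSupport u) : HasCompactSupport (vlap u k) :=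
  hcs_sum fun j => pd_hcs j (pd_hcs j (comp_hcs k hc))

theorem navier_smooth (lam mu : ℝ) (k : Fin 3) (hu : ContDiff ℝ (⊤:ℕ∞) u) :
    ContDiff ℝ (⊤:ℕ∞) (navier lam mu u k) :=
  (contDiff_const.mul (vlap_smooth k hu)).add
    (contDiff_const.mul (pd_contDiff k (divg_smooth hu)))

theorem navier_hcs (lam mu : ℝ) (k : Fin 3) (hc : HasCompactSupport u) :
    HasCompactSupport (navier lam mu u k) :=
  HasCompactSupport.add ((vlap_hcs k hc).mul_left) ((pd_hcs k (divg_hcs hc)).mul_left)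

end ops

theorem gradElast_stepA
    (lam mu g : ℝ)
    (u : V → V) (hu : ContDiff ℝ (⊤ : ℕ∞) u) (hc : HasCompactSupport u)
    (heq : ∀ x : V, ∀ k : Fin 3,
      g^2 * vlap (fun y k' => navier lam mu u k' y) k x - navier lam mu u k x = 0) :
    ∀ k x, navier lam mu u k x = 0 := by
  intro k
  set w : V → ℝ := navier lam mu u k with hw
  have hws : ContDiff ℝ (⊤:ℕ∞) w := navier_smooth lam mu k hu
  have hwc : HasCompactSupport w := navier_hcs lam mu k hc
  have heqk : ∀ x : V, w x = g^2 * ∑ j : Fin 3, pd j (pd j w) x := by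
    intro x
    have := heq x k
    simp only [vlap] at this
    linarith [this]
  apply zero_of_integral_sq hws hwc
  have e1 : ∫ x : V, w x * w x = g^2 * ∫ x : V, w x * (∑ j : Fin 3, pd j (pd j w) x) := by
    rw [← MeasureTheory.integral_const_mul]
    apply MeasureTheory.integral_congr_ae
    filter_upwards with x
    nth_rewrite 2 [heqk x]
    ring
  rw [lap_energy hws hwc] at e1
  have hnonneg : (0:ℝ) ≤ ∫ x : V, w x * w x :=
    integral_nonneg fun x => mul_self_nonneg (w x)
  have hterm : ∀ j : Fin 3, (0:ℝ) ≤ ∫ x : V, pd j w x * pd j w x :=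
    fun j => integral_nonneg fun x => mul_self_nonneg _
  have hsum : (0:ℝ) ≤ ∑ j : Fin 3, ∫ x : V, pd j w x * pd j w x :=
    Finset.sum_nonneg fun j _ => hterm j
  nlinarith [sq_nonneg g]

theorem gradElast_stepB
    (lam mu : ℝ) (hmu : 0 < mu) (hlm : 0 < lam + 2 * mu)
    (u : V → V) (hu : ContDiff ℝ (⊤ : ℕ∞) u) (hc : HasCompactSupport u)
    (hnav : ∀ k x, navier lam mu u k x = 0) :
    ∀ x : V, u x = 0 := by
  set f : Fin 3 → V → ℝ := fun k y => u y k with hf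
  have fs : ∀ k, ContDiff ℝ (⊤:ℕ∞) (f k) := fun k => comp_smooth k hu
  have fc : ∀ k, HasCompactSupport (f k) := fun k => comp_hcs k hc
  set d : V → ℝ := divg u with hd
  have ds : ContDiff ℝ (⊤:ℕ∞) d := divg_smooth hu
  have dc : HasCompactSupport d := divg_hcs hc
  set S : ℝ := ∑ k : Fin 3, ∑ j : Fin 3, ∫ x : V, pd j (f k) x * pd j (f k) x with hS
  set D : ℝ := ∫ x : V, d x * d x with hD
  -- B1 : mu * S + (lam + mu) * D = 0
  have hB1 : mu * S + (lam + mu) * D = 0 := by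
    have hk : ∀ k : Fin 3,
        mu * (∫ x : V, f k x * vlap u k x) + (lam + mu) * (∫ x : V, f k x * pd k d x) = 0 := by
      intro k
      have h0 : (∫ x : V, mu * (f k x * vlap u k x) + (lam + mu) * (f k x * pd k d x)) = 0 := by
        have : (fun x : V => mu * (f k x * vlap u k x) + (lam + mu) * (f k x * pd k d x))
            = fun x => f k x * navier lam mu u k x := by
          funext x; simp only [navier]; ring
        rw [this]
        simp [hnav]
      rw [integral_add
        ((integ ((fs k).mul (vlap_smooth k hu)) (fc k).mul_right).const_mul mu)
        ((integ ((fs k).mul (pd_contDiff k ds)) (fc k).mul_right).const_mul (lam+mu)),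
        MeasureTheory.integral_const_mul, MeasureTheory.integral_const_mul] at h0
      exact h0
    have hlapk : ∀ k : Fin 3, (∫ x : V, f k x * vlap u k x)
        = - ∑ j : Fin 3, ∫ x : V, pd j (f k) x * pd j (f k) x := by
      intro k
      exact lap_energy (fs k) (fc k)
    have hibpk : ∀ k : Fin 3, (∫ x : V, f k x * pd k d x)
        = - ∫ x : V, pd k (f k) x * d x := fun k => ibp k (fs k) ds (fc k)
    have hsumd : ∑ k : Fin 3, ∫ x : V, pd k (f k) x * d x = D := by
      rw [← MeasureTheory.integral_finset_sum _ (fun k _ =>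
        integ ((pd_contDiff k (fs k)).mul ds) (pd_hcs k (fc k)).mul_right)]
      apply MeasureTheory.integral_congr_ae
      filter_upwards with x
      rw [← Finset.sum_mul]
      rfl
    have htot : ∑ k : Fin 3, (mu * (- ∑ j : Fin 3, ∫ x : V, pd j (f k) x * pd j (f k) x)
        + (lam + mu) * (- ∫ x : V, pd k (f k) x * d x)) = 0 := by
      apply Finset.sum_eq_zero
      intro k _
      rw [← hlapk k, ← hibpk k]
      exact hk k
    rw [Finset.sum_add_distrib, ← Finset.mul_sum, ← Finset.mul_sum] at htot
    rw [show ∑ k : Fin 3, -∫ x : V, pd k (f k) x * d x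
        = - ∑ k : Fin 3, ∫ x : V, pd k (f k) x * d x from by rw [Finset.sum_neg_distrib],
      hsumd] at htot
    rw [show ∑ k : Fin 3, (- ∑ j : Fin 3, ∫ x : V, pd j (f k) x * pd j (f k) x)
        = - S from by rw [Finset.sum_neg_distrib]] at htot
    linarith
  -- B2 : C = D
  have hB2 : ∑ k : Fin 3, ∑ j : Fin 3, (∫ x : V, pd j (f k) x * pd k (f j) x) = D := by
    have hterm : ∀ k j : Fin 3, (∫ x : V, pd j (f k) x * pd k (f j) x)
        = ∫ x : V, pd j (f j) x * pd k (f k) x := by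
      intro k j
      have e1 : (∫ x : V, pd j (f k) x * pd k (f j) x)
          = - ∫ x : V, pd k (pd j (f k)) x * f j x :=
        ibp k (pd_contDiff j (fs k)) (fs j) (pd_hcs j (fc k))
      have e2 : (∫ x : V, pd k (pd j (f k)) x * f j x)
          = ∫ x : V, f j x * pd j (pd k (f k)) x := by
        apply MeasureTheory.integral_congr_ae
        filter_upwards with x
        rw [pd_comm k j (fs k) x]; ring
      have e3 : (∫ x : V, f j x * pd j (pd k (f k)) x)
          = - ∫ x : V, pd j (f j) x * pd k (f k) x :=
        ibp j (fs j) (pd_contDiff k (fs k)) (fc j)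
      rw [e1, e2, e3, neg_neg]
    rw [Finset.sum_congr rfl (fun k _ => Finset.sum_congr rfl (fun j _ => hterm k j))]
    have hswap : ∑ k : Fin 3, ∑ j : Fin 3, (∫ x : V, pd j (f j) x * pd k (f k) x)
        = ∫ x : V, (∑ j : Fin 3, pd j (f j) x) * (∑ k : Fin 3, pd k (f k) x) := by
      rw [show (fun x : V => (∑ j : Fin 3, pd j (f j) x) * (∑ k : Fin 3, pd k (f k) x))
          = fun x => ∑ k : Fin 3, ∑ j : Fin 3, pd j (f j) x * pd k (f k) x from by
        funext x
        rw [Finset.sum_comm]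
        rw [Finset.sum_mul_sum]]
      rw [MeasureTheory.integral_finset_sum _ (fun k _ =>
        MeasureTheory.integrable_finset_sum _ (fun j _ =>
          integ ((pd_contDiff j (fs j)).mul (pd_contDiff k (fs k)))
            (pd_hcs j (fc j)).mul_right))]
      apply Finset.sum_congr rfl
      intro k _
      rw [MeasureTheory.integral_finset_sum _ (fun j _ =>
        integ ((pd_contDiff j (fs j)).mul (pd_contDiff k (fs k)))
          (pd_hcs j (fc j)).mul_right)]
    rw [hswap]
    rfl
  -- A ≥ 0 : S ≥ D
  have hSD : D ≤ S := by
    have hexp : ∀ k j : Fin 3,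
        (∫ x : V, (pd j (f k) x - pd k (f j) x) * (pd j (f k) x - pd k (f j) x))
        = (∫ x : V, pd j (f k) x * pd j (f k) x) + (∫ x : V, pd k (f j) x * pd k (f j) x)
          - 2 * ∫ x : V, pd j (f k) x * pd k (f j) x := by
      intro k j
      have i1 : Integrable (fun x : V => pd j (f k) x * pd j (f k) x) :=
        integ ((pd_contDiff j (fs k)).mul (pd_contDiff j (fs k))) (pd_hcs j (fc k)).mul_right
      have i2 : Integrable (fun x : V => pd k (f j) x * pd k (f j) x) :=
        integ ((pd_contDiff k (fs j)).mul (pd_contDiff k (fs j))) (pd_hcs k (fc j)).mul_right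
      have i3 : Integrable (fun x : V => pd j (f k) x * pd k (f j) x) :=
        integ ((pd_contDiff j (fs k)).mul (pd_contDiff k (fs j))) (pd_hcs j (fc k)).mul_right
      rw [show (fun x : V => (pd j (f k) x - pd k (f j) x) * (pd j (f k) x - pd k (f j) x))
          = fun x : V => (pd j (f k) x * pd j (f k) x + pd k (f j) x * pd k (f j) x)
            - 2 * (pd j (f k) x * pd k (f j) x) from by funext x; ring]
      have i12 : Integrable (fun x : V => pd j (f k) x * pd j (f k) x
          + pd k (f j) x * pd k (f j) x) := i1.add i2
      have i3' : Integrable (fun x : V => 2 * (pd j (f k) x * pd k (f j) x)) := i3.const_mul 2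
      rw [MeasureTheory.integral_sub i12 i3',
        MeasureTheory.integral_add i1 i2, MeasureTheory.integral_const_mul]
    have hA : (0:ℝ) ≤ ∑ k : Fin 3, ∑ j : Fin 3,
        ∫ x : V, (pd j (f k) x - pd k (f j) x) * (pd j (f k) x - pd k (f j) x) :=
      Finset.sum_nonneg fun k _ => Finset.sum_nonneg fun j _ =>
        integral_nonneg fun x => mul_self_nonneg _
    have hexp2 : ∑ k : Fin 3, ∑ j : Fin 3,
        (∫ x : V, (pd j (f k) x - pd k (f j) x) * (pd j (f k) x - pd k (f j) x))
        = S + S - 2 * D := by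
      rw [Finset.sum_congr rfl (fun k _ => Finset.sum_congr rfl (fun j _ => hexp k j))]
      have e1 : ∑ k : Fin 3, ∑ j : Fin 3, (∫ x : V, pd k (f j) x * pd k (f j) x) = S := by
        rw [Finset.sum_comm]
      have e2 : ∑ k : Fin 3, ∑ j : Fin 3,
          ((∫ x : V, pd j (f k) x * pd j (f k) x) + (∫ x : V, pd k (f j) x * pd k (f j) x)
            - 2 * ∫ x : V, pd j (f k) x * pd k (f j) x)
          = (∑ k : Fin 3, ∑ j : Fin 3, ∫ x : V, pd j (f k) x * pd j (f k) x)
            + (∑ k : Fin 3, ∑ j : Fin 3, ∫ x : V, pd k (f j) x * pd k (f j) x)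
            - 2 * ∑ k : Fin 3, ∑ j : Fin 3, ∫ x : V, pd j (f k) x * pd k (f j) x := by
        simp only [Finset.sum_sub_distrib, Finset.sum_add_distrib, Finset.mul_sum]
      rw [e2, e1, hB2, ← hS]
    linarith [hexp2 ▸ hA]
  -- conclude S = 0
  have hD0 : (0:ℝ) ≤ D := integral_nonneg fun x => mul_self_nonneg _
  have h1 : mu * (S - D) + (lam + 2*mu) * D = 0 := by linear_combination hB1
  have ha0 : (0:ℝ) ≤ mu * (S - D) := mul_nonneg hmu.le (by linarith)
  have hb0 : (0:ℝ) ≤ (lam + 2*mu) * D := mul_nonneg hlm.le hD0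
  have hDzero : D = 0 := by
    have hb : (lam + 2*mu) * D = 0 := by linarith
    rcases mul_eq_zero.mp hb with h | h
    · exact absurd h (ne_of_gt hlm)
    · exact h
  have hSzero : S = 0 := by
    have ha : mu * (S - D) = 0 := by linarith
    rcases mul_eq_zero.mp ha with h | h
    · exact absurd h (ne_of_gt hmu)
    · linarith
  -- each integral is zero
  have hall : ∀ k j : Fin 3, (∫ x : V, pd j (f k) x * pd j (f k) x) = 0 := by
    intro k j
    have hsum0 : (∑ k : Fin 3, ∑ j : Fin 3, ∫ x : V, pd j (f k) x * pd j (f k) x) = 0 := hSzero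
    have h2 : ∑ j : Fin 3, (∫ x : V, pd j (f k) x * pd j (f k) x) = 0 := by
      have := (Finset.sum_eq_zero_iff_of_nonneg (fun k (_ : k ∈ Finset.univ) =>
        Finset.sum_nonneg (fun j (_ : j ∈ Finset.univ) =>
          integral_nonneg fun x => mul_self_nonneg (pd j (f k) x)))).mp hsum0
      exact this k (Finset.mem_univ k)
    exact (Finset.sum_eq_zero_iff_of_nonneg (fun j (_ : j ∈ Finset.univ) =>
      integral_nonneg fun x => mul_self_nonneg (pd j (f k) x))).mp h2 j (Finset.mem_univ j)
  have hpd0 : ∀ k j : Fin 3, ∀ x : V, pd j (f k) x = 0 := fun k j =>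
    zero_of_integral_sq (pd_contDiff j (fs k)) (pd_hcs j (fc k)) (hall k j)
  -- fderiv vanishes
  have hfd : ∀ (k : Fin 3) (x : V), fderiv ℝ (f k) x = 0 := by
    intro k x
    ext v
    have hv : v = ∑ j : Fin 3, v j • (Pi.single j 1 : V) := by
      funext m
      simp [Finset.sum_apply, Pi.single_apply, mul_comm]
    rw [show fderiv ℝ (f k) x v = fderiv ℝ (f k) x (∑ j : Fin 3, v j • (Pi.single j 1 : V))
      from by rw [← hv]]
    rw [map_sum]
    apply Finset.sum_eq_zero
    intro j _
    rw [ContinuousLinearMap.map_smul]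
    have := hpd0 k j x
    simp only [pd] at this
    simp [this]
  -- constant, hence zero
  have hconst : ∀ k : Fin 3, ∀ x y : V, f k x = f k y := fun k =>
    is_const_of_fderiv_eq_zero (smooth_diff (fs k)) (hfd k)
  intro x
  funext k
  obtain ⟨r, hr⟩ := (fc k).isBounded.subset_closedBall (0 : V)
  set x0 : V := fun _ => |r| + 1 with hx0
  have hx0out : x0 ∉ tsupport (f k) := by
    intro hmem
    have h1 := hr hmem
    simp only [Metric.mem_closedBall, dist_zero_right] at h1
    have h2 : |x0 0| ≤ ‖x0‖ := by simpa using norm_le_pi_norm x0 0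
    have h3 : |x0 0| = |r| + 1 := by
      simp only [hx0]
      rw [abs_of_nonneg (by positivity)]
    have := le_abs_self r
    linarith
  have : f k x = f k x0 := hconst k x x0
  rw [show u x k = f k x from rfl, this, image_eq_zero_of_notMem_tsupport hx0out]
  rfl


/-- the simplified fourth order gradient elasticity operator
`(1 − g²Δ)Δ*·` has trivial kernel among smooth compactly supported vector fields. -/
theorem simplified_gradient_elasticity_trivial_kernel
    (lam mu g : ℝ) (hmu : 0 < mu) (hlm : 0 < lam + 2 * mu) (hg : 0 < g)
    (u : V → V) (hu : ContDiff ℝ (⊤ : ℕ∞) u) (hc : HasCompactSupport u)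
    (heq : ∀ x : V, ∀ k : Fin 3,
      g^2 * vlap (fun y k' => navier lam mu u k' y) k x - navier lam mu u k x = 0) :
    ∀ x : V, u x = 0 := by
  exact gradElast_stepB lam mu hmu hlm u hu hc
    (gradElast_stepA lam mu g u hu hc heq)
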